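/- Let (S, P) be a probability space, let n ≥ 2 be an integer, let W_1, …, W_n be events, and let W = W_1 ∩ … ∩ W_n with P(W) > 0. Let 0 < ε ≤ 1 and suppose log₂(1/P(W)) ≤ εn/16 − log₂(4/ε). Then there exists a subset C ⊆ {1,…,n} with |C| ≤ (8/ε)·(log₂(4/ε) + log₂(1/P(W))) and |C| < n such that (1/(n − |C|)) · Σ_{i ∉ C} P(W_i | W_C) ≥ 1 − ε/2, where W_C = ∩_{i ∈ C} W_i (with W_∅ the whole space, so that P(W_C) > 0). -/

import Mathlib

open MeasureTheory

/-- Proposition 1 of the paper: if `log₂(1/P(W)) ≤ εn/16 − log₂(4/ε)`, there is a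
not-too-large set `C` of coordinates such that the average conditional winning
probability of the remaining coordinates, given winning all coordinates in `C`,
is at least `1 − ε/2`. -/
theorem stmt0 {S : Type*} [MeasurableSpace S] (P : Measure S) [IsProbabilityMeasure P]
    (n : ℕ) (hn : 2 ≤ n) (W : Fin n → Set S) (hWmeas : ∀ i, MeasurableSet (W i))
    (hWpos : 0 < P (⋂ i, W i))
    (ε : ℝ) (hε0 : 0 < ε) (hε1 : ε ≤ 1)
    (hlog : Real.logb 2 (1 / (P (⋂ i, W i)).toReal)
      ≤ ε * n / 16 - Real.logb 2 (4 / ε)) :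
    ∃ C : Finset (Fin n),
      (C.card : ℝ) ≤ (8 / ε) *
        (Real.logb 2 (4 / ε) + Real.logb 2 (1 / (P (⋂ i, W i)).toReal)) ∧
      C.card < n ∧
      (1 / ((n : ℝ) - C.card)) *
        ∑ i ∈ Finset.univ \ C,
          (P (W i ∩ ⋂ j ∈ C, W j)).toReal / (P (⋂ j ∈ C, W j)).toReal
        ≥ 1 - ε / 2 := by
  classical
  set q : ℝ := (P (⋂ i, W i)).toReal with hqdef
  have hq0 : 0 < q := ENNReal.toReal_pos hWpos.ne' (measure_ne_top P _)
  have hq1 : q ≤ 1 := by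
    have h := prob_le_one (μ := P) (s := ⋂ i, W i)
    simpa using ENNReal.toReal_mono (by norm_num) h
  set L : ℝ := Real.logb 2 (1 / q) with hLdef
  have hL0 : 0 ≤ L := Real.logb_nonneg (by norm_num) (by
    rw [le_div_iff₀ hq0]; linarith)
  have hlog4 : (0:ℝ) ≤ Real.logb 2 (4 / ε) := Real.logb_nonneg (by norm_num)
    (by rw [le_div_iff₀ hε0]; linarith)
  set p : Finset (Fin n) → ℝ := fun C => (P (⋂ j ∈ C, W j)).toReal with hpdef
  have hmono : ∀ C : Finset (Fin n), q ≤ p C := by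
    intro C
    refine ENNReal.toReal_le_toReal (measure_ne_top P _) (measure_ne_top P _) |>.mpr ?_
    exact measure_mono (Set.subset_iInter₂ fun j _ => Set.iInter_subset W j)
  have hpC0 : ∀ C, 0 < p C := fun C => lt_of_lt_of_le hq0 (hmono C)
  -- the family of "bad" sets
  set T : Finset (Finset (Fin n)) :=
    Finset.univ.filter (fun C => p C ≤ (1 - ε/2) ^ C.card) with hTdef
  have hTne : T.Nonempty := by
    refine ⟨∅, ?_⟩
    simp only [hTdef, Finset.mem_filter, Finset.mem_univ, true_and]
    simp [hpdef]
  obtain ⟨C, hCT, hCmax⟩ := T.exists_max_image (fun C => C.card) hTne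
  have hCbad : p C ≤ (1 - ε/2) ^ C.card := by
    simpa [hTdef] using hCT
  set k := C.card with hkdef
  have hε2 : (0:ℝ) < 1 - ε/2 := by linarith
  -- card bound: k * ε/2 ≤ L
  have hkey : (k : ℝ) * (ε/2) ≤ L := by
    have h1 : q ≤ (1 - ε/2) ^ k := le_trans (hmono C) hCbad
    have h2 : Real.logb 2 q ≤ Real.logb 2 ((1 - ε/2) ^ k) :=
      Real.logb_le_logb_of_le (by norm_num) hq0 h1
    rw [Real.logb_pow] at h2
    have h3 : Real.logb 2 (1 - ε/2) ≤ -(ε/2) := by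
      have hlg : Real.log (1 - ε/2) ≤ -(ε/2) := by
        have := Real.log_le_sub_one_of_pos hε2
        linarith
      have hlog2 : 0 < Real.log 2 := Real.log_pos (by norm_num)
      have hlog2' : Real.log 2 ≤ 1 := by
        have := Real.log_le_sub_one_of_pos (by norm_num : (0:ℝ) < 2)
        linarith
      rw [Real.logb, div_le_iff₀ hlog2]
      nlinarith
    have h4 : (k:ℝ) * Real.logb 2 (1 - ε/2) ≤ (k:ℝ) * (-(ε/2)) :=
      mul_le_mul_of_nonneg_left h3 (Nat.cast_nonneg k)
    have h5 : Real.logb 2 q = -L := by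
      rw [hLdef, one_div, Real.logb_inv, neg_neg]
    linarith
  have hk2L : (k : ℝ) ≤ 2 * L / ε := by
    rw [le_div_iff₀ hε0]; linarith
  have hcard : (k : ℝ) ≤ (8 / ε) * (Real.logb 2 (4 / ε) + L) := by
    have h8 : (2:ℝ) * L / ε ≤ 8 / ε * (Real.logb 2 (4/ε) + L) := by
      rw [div_mul_eq_mul_div, div_le_div_iff₀ hε0 hε0]
      nlinarith
    linarith
  have hkn : k < n := by
    have h1 : L ≤ ε * n / 16 := by linarith
    have h2 : (k : ℝ) ≤ (n:ℝ)/8 :=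
      le_of_mul_le_mul_right (by nlinarith) hε0
    have : (k:ℝ) < n := by
      have hn0 : (0:ℝ) < n := by positivity
      linarith [hn0]
    exact_mod_cast this
  refine ⟨C, hcard, hkn, ?_⟩
  -- the average bound
  by_contra hcon
  push_neg at hcon
  have hnk : (0:ℝ) < (n:ℝ) - k := by
    have : (k:ℝ) < n := by exact_mod_cast hkn
    linarith
  have hcards : ((Finset.univ \ C).card : ℝ) = (n:ℝ) - k := by
    rw [Finset.card_sdiff_of_subset (Finset.subset_univ C), Finset.card_univ, Fintype.card_fin]
    rw [Nat.cast_sub hkn.le]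
  have hsum : ∑ i ∈ Finset.univ \ C,
      (P (W i ∩ ⋂ j ∈ C, W j)).toReal / (P (⋂ j ∈ C, W j)).toReal
      < ∑ _i ∈ Finset.univ \ C, (1 - ε/2) := by
    rw [Finset.sum_const, nsmul_eq_mul, hcards]
    rw [one_div, inv_mul_lt_iff₀ hnk] at hcon
    linarith [hcon]
  obtain ⟨i, hiC, hi⟩ := Finset.exists_lt_of_sum_lt hsum
  have hiC' : i ∉ C := (Finset.mem_sdiff.mp hiC).2
  -- insert i C is a bigger bad set
  have hpins : p (insert i C) ≤ (1 - ε/2) ^ (insert i C).card := by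
    have hnum : (P (W i ∩ ⋂ j ∈ C, W j)).toReal < (1 - ε/2) * p C := by
      rw [div_lt_iff₀ (hpC0 C)] at hi
      exact hi
    have : p (insert i C) = (P (W i ∩ ⋂ j ∈ C, W j)).toReal := by
      simp [hpdef, Finset.set_biInter_insert]
    rw [this, Finset.card_insert_of_notMem hiC', pow_succ']
    calc (P (W i ∩ ⋂ j ∈ C, W j)).toReal ≤ (1 - ε/2) * p C := hnum.le
      _ ≤ (1 - ε/2) * (1 - ε/2) ^ C.card :=
          mul_le_mul_of_nonneg_left hCbad hε2.le
  have hmem : insert i C ∈ T := by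
    simp only [hTdef, Finset.mem_filter, Finset.mem_univ, true_and]
    exact hpins
  have := hCmax _ hmem
  rw [Finset.card_insert_of_notMem hiC'] at this
  omega
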